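/- Let C be a category satisfying the calculus of fractions, and fix an object x. For arrows α₁ : c₁ → x and α₂ : c₂ → x, say (α₁, m₁) ⊂ (α₂, m₂) for data m_i attached to the domains (pulled back functorially along arrows, with pull-back preserving and reflecting a partial order ⊂ on the data) if SOME square filling (β₁, β₂) of (α₁, α₂) satisfies β₁*(m₁) ⊂ β₂*(m₂). Then: (a) if some square filling satisfies this condition, every square filling does; and (b) the relation ⊂ on pairs (α, m) is reflexive and transitive. -/
import Mathlib


open CategoryTheory

/-- for marked arrows over a fixed object `x` in a category with
calculus of fractions, with a functorial marking pull-back preserving and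
reflecting a preorder on markings: (a) if some square filling witnesses the
relation `(α₁, m₁) ⊂ (α₂, m₂)`, then every square filling does; (b) the
relation on marked arrows is reflexive and transitive. -/
theorem marked_arrows_preorder {C : Type*} [Category C]
    -- calculus of fractions
    (hsq : ∀ {A B D : C} (x : A ⟶ D) (y : B ⟶ D),
      ∃ (P : C) (p : P ⟶ A) (q : P ⟶ B), p ≫ x = q ≫ y)
    (heq : ∀ {A B E : C} (f g : A ⟶ B) (h : B ⟶ E), f ≫ h = g ≫ h →
      ∃ (Z : C) (e : Z ⟶ A), e ≫ f = e ≫ g)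
    -- markings and their pull-back
    (M : C → Type*)
    (pull : ∀ {d c : C}, (d ⟶ c) → M c → M d)
    (rel : ∀ {c : C}, M c → M c → Prop)
    (hrel_refl : ∀ {c : C} (m : M c), rel m m)
    (hrel_trans : ∀ {c : C} {m₁ m₂ m₃ : M c}, rel m₁ m₂ → rel m₂ m₃ → rel m₁ m₃)
    (hfunc : ∀ {e d c : C} (β : e ⟶ d) (γ : d ⟶ c) (m : M c),
      pull (β ≫ γ) m = pull β (pull γ m))
    (hiff : ∀ {d c : C} (β : d ⟶ c) (m₁ m₂ : M c),
      rel m₁ m₂ ↔ rel (pull β m₁) (pull β m₂))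
    -- the base object
    (x : C) :
    -- the subset relation on marked arrows over x
    let Sub : ∀ {c₁ c₂ : C}, (c₁ ⟶ x) × M c₁ → (c₂ ⟶ x) × M c₂ → Prop :=
      fun {c₁ c₂} p₁ p₂ =>
        ∃ (d : C) (β₁ : d ⟶ c₁) (β₂ : d ⟶ c₂),
          β₁ ≫ p₁.1 = β₂ ≫ p₂.1 ∧ rel (pull β₁ p₁.2) (pull β₂ p₂.2)
    -- (a) independence of the square filling
    (∀ {c₁ c₂ : C} (p₁ : (c₁ ⟶ x) × M c₁) (p₂ : (c₂ ⟶ x) × M c₂),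
      Sub p₁ p₂ → ∀ {d : C} (γ₁ : d ⟶ c₁) (γ₂ : d ⟶ c₂),
        γ₁ ≫ p₁.1 = γ₂ ≫ p₂.1 → rel (pull γ₁ p₁.2) (pull γ₂ p₂.2)) ∧
    -- (b) reflexivity
    (∀ {c : C} (p : (c ⟶ x) × M c), Sub p p) ∧
    -- (b) transitivity
    (∀ {c₁ c₂ c₃ : C} (p₁ : (c₁ ⟶ x) × M c₁) (p₂ : (c₂ ⟶ x) × M c₂)
      (p₃ : (c₃ ⟶ x) × M c₃), Sub p₁ p₂ → Sub p₂ p₃ → Sub p₁ p₃) := by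
  intro Sub
  refine ⟨?_, ?_, ?_⟩
  · -- (a)
    rintro c₁ c₂ p₁ p₂ ⟨d, β₁, β₂, hβ, hrel⟩ d' γ₁ γ₂ hγ
    -- fill square over x between d and d'
    obtain ⟨e, s, t, hst⟩ := hsq (β₁ ≫ p₁.1) (γ₁ ≫ p₁.1)
    -- equalize on c₁
    obtain ⟨e₁, u, hu⟩ := heq (s ≫ β₁) (t ≫ γ₁) p₁.1
      (by simpa [Category.assoc] using hst)
    -- equalize on c₂
    have h2 : (u ≫ s ≫ β₂) ≫ p₂.1 = (u ≫ t ≫ γ₂) ≫ p₂.1 := by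
      have e1 : (u ≫ s ≫ β₁) ≫ p₁.1 = (u ≫ t ≫ γ₁) ≫ p₁.1 := by
        simpa [Category.assoc] using congrArg (· ≫ p₁.1) hu
      calc (u ≫ s ≫ β₂) ≫ p₂.1 = (u ≫ s ≫ β₁) ≫ p₁.1 := by
            simp only [Category.assoc, ← hβ]
        _ = (u ≫ t ≫ γ₁) ≫ p₁.1 := e1
        _ = (u ≫ t ≫ γ₂) ≫ p₂.1 := by simp only [Category.assoc, hγ]
    obtain ⟨e₂, v, hv⟩ := heq (u ≫ s ≫ β₂) (u ≫ t ≫ γ₂) p₂.1 h2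
    have h1 : (v ≫ u ≫ s) ≫ β₁ = (v ≫ u ≫ t) ≫ γ₁ := by
      simpa [Category.assoc] using congrArg (v ≫ ·) hu
    have h2' : (v ≫ u ≫ s) ≫ β₂ = (v ≫ u ≫ t) ≫ γ₂ := by
      simpa [Category.assoc] using hv
    have key : rel (pull ((v ≫ u ≫ s) ≫ β₁) p₁.2) (pull ((v ≫ u ≫ s) ≫ β₂) p₂.2) := by
      rw [hfunc (v ≫ u ≫ s) β₁ p₁.2, hfunc (v ≫ u ≫ s) β₂ p₂.2]
      exact (hiff (v ≫ u ≫ s) _ _).1 hrel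
    rw [h1, h2', hfunc (v ≫ u ≫ t) γ₁ p₁.2, hfunc (v ≫ u ≫ t) γ₂ p₂.2] at key
    exact (hiff (v ≫ u ≫ t) _ _).2 key
  · -- reflexivity
    intro c p
    exact ⟨c, 𝟙 c, 𝟙 c, rfl, hrel_refl _⟩
  · -- transitivity
    rintro c₁ c₂ c₃ p₁ p₂ p₃ ⟨d, β₁, β₂, hβ, hrelβ⟩ ⟨e, γ₂, γ₃, hγ, hrelγ⟩
    obtain ⟨f, s, t, hst⟩ := hsq (β₂ ≫ p₂.1) (γ₂ ≫ p₂.1)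
    obtain ⟨g, u, hu⟩ := heq (s ≫ β₂) (t ≫ γ₂) p₂.1
      (by simpa [Category.assoc] using hst)
    refine ⟨g, (u ≫ s) ≫ β₁, (u ≫ t) ≫ γ₃, ?_, ?_⟩
    · calc ((u ≫ s) ≫ β₁) ≫ p₁.1 = (u ≫ s ≫ β₂) ≫ p₂.1 := by
            simp only [Category.assoc, hβ]
        _ = (u ≫ t ≫ γ₂) ≫ p₂.1 := by
            simpa [Category.assoc] using congrArg (· ≫ p₂.1) hu
        _ = ((u ≫ t) ≫ γ₃) ≫ p₃.1 := by simp only [Category.assoc, hγ]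
    · have hm₁ : rel (pull ((u ≫ s) ≫ β₁) p₁.2) (pull ((u ≫ s) ≫ β₂) p₂.2) := by
        rw [hfunc (u ≫ s) β₁ p₁.2, hfunc (u ≫ s) β₂ p₂.2]
        exact (hiff (u ≫ s) _ _).1 hrelβ
      have hm₂ : rel (pull ((u ≫ t) ≫ γ₂) p₂.2) (pull ((u ≫ t) ≫ γ₃) p₃.2) := by
        rw [hfunc (u ≫ t) γ₂ p₂.2, hfunc (u ≫ t) γ₃ p₃.2]
        exact (hiff (u ≫ t) _ _).1 hrelγ
      have hmid : (u ≫ s) ≫ β₂ = (u ≫ t) ≫ γ₂ := by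
        simpa [Category.assoc] using hu
      rw [hmid] at hm₁
      exact hrel_trans hm₁ hm₂
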